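/- Fourier slice theorem: for integrable f: ℝ² → ℂ, the 1D Fourier transform of the Radon projection t ↦ Rf(α,t) evaluated at frequency r equals the 2D Fourier transform of f evaluated at the point (−r sin α, r cos α); i.e., ∫_{ℝ} Rf(α,t) e^{−2πi r t} dt = F₂f(−r sin α, r cos α). -/

import Mathlib

open Real MeasureTheory Complex

noncomputable def radonC (f : ℝ × ℝ → ℂ) (α t : ℝ) : ℂ :=
  ∫ z : ℝ, f (z * Real.cos α - t * Real.sin α, z * Real.sin α + t * Real.cos α)

noncomputable def fourier2D (f : ℝ × ℝ → ℂ) (ξ₁ ξ₂ : ℝ) : ℂ :=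
  ∫ p : ℝ × ℝ, f p * Complex.exp (-2 * Real.pi * Complex.I * (p.1 * ξ₁ + p.2 * ξ₂))

/-- The rotation-like linear map `(t, z) ↦ (z cos α − t sin α, z sin α + t cos α)`. -/
noncomputable def rotSlice (α : ℝ) : (ℝ × ℝ) →ₗ[ℝ] (ℝ × ℝ) :=
  Matrix.toLin (Module.Basis.finTwoProd ℝ) (Module.Basis.finTwoProd ℝ)
    !![-Real.sin α, Real.cos α; Real.cos α, Real.sin α]

lemma rotSlice_apply (α t z : ℝ) :
    rotSlice α (t, z) = (z * Real.cos α - t * Real.sin α, z * Real.sin α + t * Real.cos α) := by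
  simp [rotSlice, Matrix.toLin_finTwoProd_apply]
  constructor <;> ring

lemma rotSlice_det_ne_zero (α : ℝ) : LinearMap.det (rotSlice α) ≠ 0 := by
  rw [rotSlice, LinearMap.det_toLin, Matrix.det_fin_two_of]
  nlinarith [Real.sin_sq_add_cos_sq α]

lemma rotSlice_measurePreserving (α : ℝ) :
    MeasurePreserving (rotSlice α) (volume : Measure (ℝ × ℝ)) volume := by
  have hdet : LinearMap.det (rotSlice α) = -1 := by
    rw [rotSlice, LinearMap.det_toLin, Matrix.det_fin_two_of]
    nlinarith [Real.sin_sq_add_cos_sq α]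
  refine ⟨(rotSlice α).continuous_of_finiteDimensional.measurable, ?_⟩
  rw [Measure.map_linearMap_addHaar_eq_smul_addHaar volume (by rw [hdet]; norm_num), hdet]
  norm_num

lemma rotSlice_measurableEmbedding (α : ℝ) : MeasurableEmbedding (rotSlice α) := by
  have hinj : Function.Injective (rotSlice α) := by
    have h := ((rotSlice α).equivOfDetNeZero (rotSlice_det_ne_zero α)).injective
    exact h
  exact ((rotSlice α).isClosedEmbedding_of_injective
    (LinearMap.ker_eq_bot_of_injective hinj)).measurableEmbedding

/-- Fourier slice theorem: the 1D Fourier transform of the Radon projection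
`t ↦ Rf(α,t)` at frequency `r` equals the 2D Fourier transform of `f` at
`(−r sin α, r cos α)`. -/
theorem fourier_slice (f : ℝ × ℝ → ℂ) (hf : Integrable f) (α r : ℝ) :
    (∫ t : ℝ, radonC f α t * Complex.exp (-2 * Real.pi * Complex.I * r * t)) =
      fourier2D f (-r * Real.sin α) (r * Real.cos α) := by
  set ξ₁ : ℝ := -r * Real.sin α with hξ₁
  set ξ₂ : ℝ := r * Real.cos α with hξ₂
  set g : ℝ × ℝ → ℂ :=
    fun p => f p * Complex.exp (-2 * Real.pi * Complex.I * (p.1 * ξ₁ + p.2 * ξ₂)) with hg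
  -- integrability of g
  have hgint : Integrable g := by
    have hcont : Continuous fun p : ℝ × ℝ =>
        Complex.exp (-2 * Real.pi * Complex.I * (p.1 * ξ₁ + p.2 * ξ₂)) := by fun_prop
    have hbdd : ∀ p : ℝ × ℝ,
        ‖Complex.exp (-2 * Real.pi * Complex.I * (p.1 * ξ₁ + p.2 * ξ₂))‖ ≤ 1 := by
      intro p
      rw [Complex.norm_exp]
      simp
    have := Integrable.bdd_mul hf hcont.aestronglyMeasurable (Filter.Eventually.of_forall hbdd)
    simpa [hg, mul_comm] using this
  have hpres := rotSlice_measurePreserving α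
  have hemb := rotSlice_measurableEmbedding α
  -- the key pointwise identity
  have key : ∀ t z : ℝ,
      f (z * Real.cos α - t * Real.sin α, z * Real.sin α + t * Real.cos α) *
        Complex.exp (-2 * Real.pi * Complex.I * r * t) = g (rotSlice α (t, z)) := by
    intro t z
    rw [rotSlice_apply, hg]
    congr 1
    have hre : (z * Real.cos α - t * Real.sin α) * ξ₁ +
        (z * Real.sin α + t * Real.cos α) * ξ₂ = r * t := by
      rw [hξ₁, hξ₂]
      linear_combination (r * t) * (Real.sin_sq_add_cos_sq α)
    have : ((z * Real.cos α - t * Real.sin α : ℝ) : ℂ) * (ξ₁ : ℂ) +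
        ((z * Real.sin α + t * Real.cos α : ℝ) : ℂ) * (ξ₂ : ℂ) = (r : ℂ) * t := by
      rw [← Complex.ofReal_mul, ← Complex.ofReal_mul, ← Complex.ofReal_add, hre]
      push_cast; ring
    rw [mul_assoc (-2 * (Real.pi : ℂ) * Complex.I) (r : ℂ) (t : ℂ), ← this]
  have h1 : (∫ t : ℝ, radonC f α t * Complex.exp (-2 * Real.pi * Complex.I * r * t)) =
      ∫ t : ℝ, ∫ z : ℝ, g (rotSlice α (t, z)) := by
    refine integral_congr_ae (Filter.Eventually.of_forall fun t => ?_)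
    unfold radonC
    beta_reduce
    rw [← integral_mul_const]
    exact integral_congr_ae (Filter.Eventually.of_forall fun z => key t z)
  have hgL : Integrable (g ∘ rotSlice α) :=
    (hpres.integrable_comp_emb hemb).2 hgint
  have h2 : (∫ t : ℝ, ∫ z : ℝ, g (rotSlice α (t, z))) = ∫ p : ℝ × ℝ, g (rotSlice α p) := by
    rw [Measure.volume_eq_prod] at hgL ⊢
    exact (MeasureTheory.integral_prod (g ∘ rotSlice α) hgL).symm
  have h3 : (∫ p : ℝ × ℝ, g (rotSlice α p)) = ∫ p : ℝ × ℝ, g p :=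
    hpres.integral_comp hemb g
  rw [h1, h2, h3, fourier2D]
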